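/- Combining the pipeline: if s ∈ ℂ^M, M = 2M_0+1 ≥ 2K+1, is generated as s(m) = Σ_{λ=-M_0}^{M_0} ĝ(λ) f̂(λ) e^{2πiλm/M} with ĝ(λ) ≠ 0 for all λ and f̂(λ) = Σ_{k=0}^{K-1} a_k e^{-2πiλ t_k/M} with distinct t_k ∈ [0, M) and nonzero a_k, then the parameters {(a_k, t_k)}_{k=0}^{K-1} are uniquely determined by s (as a multiset). -/

import Mathlib

open Complex

/-- Injectivity of `x ↦ exp(2πix/M)` on windows of width `< M`. -/
lemma aux_exp_inj (M : ℕ) (hM : 0 < M) {x y : ℝ} (hxy : |x - y| < M)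
    (h : Complex.exp (2 * Real.pi * Complex.I * x / M) =
      Complex.exp (2 * Real.pi * Complex.I * y / M)) : x = y := by
  rw [Complex.exp_eq_exp_iff_exists_int] at h
  obtain ⟨n, hn⟩ := h
  have hMne : (M : ℂ) ≠ 0 := Nat.cast_ne_zero.mpr hM.ne'
  have hpi : (2 * (Real.pi : ℂ) * Complex.I) ≠ 0 := by
    simp [Real.pi_ne_zero, Complex.I_ne_zero]
  have h2 : ((x : ℂ) - y - n * M) * (2 * (Real.pi : ℂ) * Complex.I) = 0 := by
    field_simp at hn
    linear_combination (2 * (Real.pi : ℂ) * Complex.I) * hn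
  have h3 : ((x : ℂ) - y - n * M) = 0 := by
    rcases mul_eq_zero.mp h2 with h | h
    · exact h
    · exact absurd h hpi
  have h4 : (x - y - n * M : ℝ) = 0 := by
    exact_mod_cast h3
  have h5 : x - y = n * M := by linarith
  rw [h5] at hxy
  have : |(n : ℝ)| * M < M := by
    rw [abs_mul] at hxy
    rwa [_root_.abs_of_nonneg (by positivity : (0:ℝ) ≤ (M:ℝ))] at hxy
  have hn0 : n = 0 := by
    by_contra hne
    have : (1 : ℝ) ≤ |(n : ℝ)| := by
      rw [← Int.cast_abs]
      exact_mod_cast Int.one_le_abs (by omega)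
    nlinarith [hM, (by exact_mod_cast hM : (0:ℝ) < M)]
  rw [hn0] at h5
  simp at h5
  linarith

/-- Vandermonde-type linear independence, indexed by a finset. -/
lemma aux_vand {ι : Type*} [DecidableEq ι] (S : Finset ι) (w c : ι → ℂ)
    (hw : Set.InjOn w S)
    (h : ∀ n < S.card, ∑ i ∈ S, c i * w i ^ n = 0) : ∀ i ∈ S, c i = 0 := by
  classical
  let e := S.equivFin
  have hWinj : Function.Injective (fun j => w ((e.symm j : S) : ι)) := by
    intro j1 j2 hj
    have := hw (e.symm j1).2 (e.symm j2).2 hj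
    exact e.symm.injective (Subtype.ext this)
  have key : (fun j => c ((e.symm j : S) : ι)) = 0 := by
    apply Matrix.eq_zero_of_forall_pow_sum_mul_pow_eq_zero hWinj
    intro i
    have hsum : ∑ j, c ((e.symm j : S) : ι) * w ((e.symm j : S) : ι) ^ (i : ℕ)
        = ∑ x ∈ S, c x * w x ^ (i : ℕ) := by
      rw [← Finset.sum_coe_sort S (fun x => c x * w x ^ (i : ℕ))]
      exact Fintype.sum_equiv e.symm _ _ (fun j => rfl)
    rw [hsum]
    exact h i i.2
  intro i hi
  have := congrFun key (e ⟨i, hi⟩)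
  simpa using this

lemma aux_exp_zpow (M : ℕ) (lam : ℤ) (x : ℝ) :
    Complex.exp (-2 * Real.pi * Complex.I * (lam : ℂ) * (x : ℂ) / (M : ℂ))
      = Complex.exp (-2 * Real.pi * Complex.I * (x : ℂ) / (M : ℂ)) ^ lam := by
  rw [← Complex.exp_int_mul]
  congr 1
  ring

theorem stmt17 (K M0 : ℕ) (hK : 1 ≤ K) (hM0 : K ≤ M0)
    (ghat : ℤ → ℂ) (hg : ∀ lam ∈ Finset.Icc (-(M0 : ℤ)) (M0 : ℤ), ghat lam ≠ 0)
    (a a' : Fin K → ℂ) (ha : ∀ k, a k ≠ 0) (ha' : ∀ k, a' k ≠ 0)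
    (t t' : Fin K → ℝ)
    (ht : ∀ k, t k ∈ Set.Ico (0 : ℝ) ((2 * M0 + 1 : ℕ) : ℝ))
    (ht' : ∀ k, t' k ∈ Set.Ico (0 : ℝ) ((2 * M0 + 1 : ℕ) : ℝ))
    (htd : Function.Injective t) (htd' : Function.Injective t')
    (hs : ∀ m : Fin (2 * M0 + 1),
      ∑ lam ∈ Finset.Icc (-(M0 : ℤ)) (M0 : ℤ), ghat lam *
        (∑ k, a k * Complex.exp (-2 * Real.pi * Complex.I * (lam : ℂ) * ((t k : ℝ) : ℂ) / ((2 * M0 + 1 : ℕ) : ℂ)))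
        * Complex.exp (2 * Real.pi * Complex.I * (lam : ℂ) * ((m : ℕ) : ℂ) / ((2 * M0 + 1 : ℕ) : ℂ))
      = ∑ lam ∈ Finset.Icc (-(M0 : ℤ)) (M0 : ℤ), ghat lam *
        (∑ k, a' k * Complex.exp (-2 * Real.pi * Complex.I * (lam : ℂ) * ((t' k : ℝ) : ℂ) / ((2 * M0 + 1 : ℕ) : ℂ)))
        * Complex.exp (2 * Real.pi * Complex.I * (lam : ℂ) * ((m : ℕ) : ℂ) / ((2 * M0 + 1 : ℕ) : ℂ))) :
    Multiset.map (fun k => (a k, t k)) Finset.univ.val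
      = Multiset.map (fun k => (a' k, t' k)) Finset.univ.val := by
  classical
  set N : ℕ := 2 * M0 + 1 with hN
  have hNpos : 0 < N := by omega
  -- Step 1: DFT inversion
  set L : Finset ℤ := Finset.Icc (-(M0 : ℤ)) (M0 : ℤ) with hL
  have hLcard : L.card = N := by
    rw [hL, Int.card_Icc]
    omega
  have hwinj : Set.InjOn (fun lam : ℤ =>
      Complex.exp (2 * Real.pi * Complex.I * (lam : ℂ) / (N : ℂ))) L := by
    intro l1 h1 l2 h2 hl
    simp only [Finset.mem_coe, hL, Finset.mem_Icc] at h1 h2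
    have : ((l1 : ℝ)) = ((l2 : ℝ)) := by
      apply aux_exp_inj N hNpos
      · rw [← Int.cast_sub, ← Int.cast_abs]
        have : |l1 - l2| ≤ 2 * M0 := by rw [abs_le]; omega
        calc ((|l1 - l2| : ℤ) : ℝ) ≤ ((2 * M0 : ℤ) : ℝ) := by exact_mod_cast this
          _ < N := by rw [hN]; push_cast; linarith
      · convert hl using 3 <;> push_cast <;> ring
    exact_mod_cast this
  have h1 : ∀ lam ∈ L,
      (∑ k, a k * Complex.exp (-2 * Real.pi * Complex.I * (lam : ℂ) * ((t k : ℝ) : ℂ) / (N : ℂ)))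
      = (∑ k, a' k * Complex.exp (-2 * Real.pi * Complex.I * (lam : ℂ) * ((t' k : ℝ) : ℂ) / (N : ℂ))) := by
    have key := aux_vand L
      (fun lam => Complex.exp (2 * Real.pi * Complex.I * (lam : ℂ) / (N : ℂ)))
      (fun lam => ghat lam *
        ((∑ k, a k * Complex.exp (-2 * Real.pi * Complex.I * (lam : ℂ) * ((t k : ℝ) : ℂ) / (N : ℂ)))
        - (∑ k, a' k * Complex.exp (-2 * Real.pi * Complex.I * (lam : ℂ) * ((t' k : ℝ) : ℂ) / (N : ℂ)))))
      hwinj ?_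
    · intro lam hlam
      have := key lam hlam
      have hg' := hg lam hlam
      have := mul_eq_zero.mp this
      rcases this with h | h
      · exact absurd h hg'
      · exact sub_eq_zero.mp h
    · intro n hn
      rw [hLcard] at hn
      have := hs ⟨n, hn⟩
      have hexp : ∀ lam : ℤ,
          Complex.exp (2 * Real.pi * Complex.I * (lam : ℂ) / (N : ℂ)) ^ n
          = Complex.exp (2 * Real.pi * Complex.I * (lam : ℂ) * (n : ℂ) / (N : ℂ)) := by
        intro lam
        rw [← Complex.exp_nat_mul]
        congr 1
        ring
      simp only [hexp]
      simp only [sub_mul, mul_sub]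
      rw [Finset.sum_sub_distrib, sub_eq_zero]
      convert this using 2 <;> ring
  -- Step 2: uniqueness of the exponential sum parameters
  set u : Fin K → ℂ := fun k => Complex.exp (-2 * Real.pi * Complex.I * ((t k : ℝ) : ℂ) / (N : ℂ)) with hu
  set u' : Fin K → ℂ := fun k => Complex.exp (-2 * Real.pi * Complex.I * ((t' k : ℝ) : ℂ) / (N : ℂ)) with hu'
  have hcross : ∀ (x y : ℝ), x ∈ Set.Ico (0:ℝ) ((N:ℕ):ℝ) → y ∈ Set.Ico (0:ℝ) ((N:ℕ):ℝ) →
      Complex.exp (-2 * Real.pi * Complex.I * (x:ℂ) / (N : ℂ))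
        = Complex.exp (-2 * Real.pi * Complex.I * (y:ℂ) / (N : ℂ)) → x = y := by
    intro x y hx hy h
    obtain ⟨hx0, hxN⟩ := hx
    obtain ⟨hy0, hyN⟩ := hy
    have key : (-x : ℝ) = (-y : ℝ) := by
      apply aux_exp_inj N hNpos
      · rw [abs_lt]; constructor <;> linarith
      · convert h using 2 <;> push_cast <;> ring
    linarith
  have huinj : Function.Injective u := by
    intro k1 k2 h
    exact htd (hcross _ _ (ht k1) (ht k2) h)
  have hu'inj : Function.Injective u' := by
    intro k1 k2 h
    exact htd' (hcross _ _ (ht' k1) (ht' k2) h)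
  set S : Finset ℂ := (Finset.image u Finset.univ) ∪ (Finset.image u' Finset.univ) with hS
  have hSne0 : ∀ z ∈ S, z ≠ 0 := by
    intro z hz
    rw [hS, Finset.mem_union] at hz
    rcases hz with hz | hz <;>
    · obtain ⟨k, _, hk⟩ := Finset.mem_image.mp hz
      rw [← hk]
      exact Complex.exp_ne_zero _
  have hScard : S.card ≤ 2 * K := by
    calc S.card ≤ (Finset.image u Finset.univ).card + (Finset.image u' Finset.univ).card :=
          Finset.card_union_le _ _
      _ ≤ K + K := by
          have h1 : (Finset.image u Finset.univ).card ≤ K := by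
            simpa using Finset.card_image_le (s := (Finset.univ : Finset (Fin K))) (f := u)
          have h2 : (Finset.image u' Finset.univ).card ≤ K := by
            simpa using Finset.card_image_le (s := (Finset.univ : Finset (Fin K))) (f := u')
          omega
      _ = 2 * K := by ring
  have hmemS : ∀ k, u k ∈ S := fun k =>
    Finset.mem_union_left _ (Finset.mem_image_of_mem u (Finset.mem_univ k))
  have hmemS' : ∀ k, u' k ∈ S := fun k =>
    Finset.mem_union_right _ (Finset.mem_image_of_mem u' (Finset.mem_univ k))
  have h1' : ∀ lam ∈ L, ∑ k, a k * u k ^ lam = ∑ k, a' k * u' k ^ lam := by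
    intro lam hlam
    have := h1 lam hlam
    simp only [hu, hu', ← aux_exp_zpow N lam]
    exact this
  have hc0 : ∀ z ∈ S, (∑ k, if u k = z then a k else 0) = (∑ k, if u' k = z then a' k else 0) := by
    have key := aux_vand S (fun z => z)
      (fun z => ((∑ k, if u k = z then a k else 0) - (∑ k, if u' k = z then a' k else 0))
        * z ^ (-(M0 : ℤ)))
      (Function.injective_id.injOn) ?_
    · intro z hz
      have hkz := key z hz
      rcases mul_eq_zero.mp hkz with h | h
      · exact sub_eq_zero.mp h
      · exact absurd h (zpow_ne_zero _ (hSne0 z hz))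
    · intro n hn
      have hnL : ((n : ℤ) - M0) ∈ L := by
        rw [hL, Finset.mem_Icc]
        have : n < 2 * K := lt_of_lt_of_le hn hScard
        omega
      have heq := h1' _ hnL
      have hterm : ∀ z ∈ S, (((∑ k, if u k = z then a k else 0)
            - (∑ k, if u' k = z then a' k else 0)) * z ^ (-(M0 : ℤ))) * (fun z => z) z ^ n
          = ((∑ k, if u k = z then a k else 0) - (∑ k, if u' k = z then a' k else 0))
            * z ^ ((n : ℤ) - M0) := by
        intro z hz
        have hz0 := hSne0 z hz
        simp only []
        rw [mul_assoc, ← zpow_natCast z n, ← zpow_add₀ hz0]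
        congr 2
        omega
      rw [Finset.sum_congr rfl hterm]
      have hA : ∀ (b : Fin K → ℂ) (v : Fin K → ℂ), Function.Injective v → (∀ k, v k ∈ S) →
          ∑ z ∈ S, (∑ k, if v k = z then b k else 0) * z ^ ((n : ℤ) - M0)
            = ∑ k, b k * v k ^ ((n : ℤ) - M0) := by
        intro b v hv hvS
        simp only [Finset.sum_mul, ite_mul, zero_mul]
        rw [Finset.sum_comm]
        apply Finset.sum_congr rfl
        intro k _
        rw [Finset.sum_ite_eq S (v k) (fun z => b k * z ^ ((n : ℤ) - M0)), if_pos (hvS k)]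
      simp only [sub_mul]
      rw [Finset.sum_sub_distrib, hA a u huinj hmemS, hA a' u' hu'inj hmemS', heq, sub_self]
  have hAk : ∀ k, (∑ j, if u j = u k then a j else 0) = a k := by
    intro k
    simp [huinj.eq_iff]
  have hex : ∀ k, ∃ j, u' j = u k ∧ a' j = a k ∧ t' j = t k := by
    intro k
    have h := hc0 (u k) (hmemS k)
    rw [hAk k] at h
    by_cases hej : ∃ j, u' j = u k
    · obtain ⟨j, hj⟩ := hej
      have hsum : (∑ j', if u' j' = u k then a' j' else 0) = a' j := by
        rw [← hj]
        simp [hu'inj.eq_iff]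
      refine ⟨j, hj, (h.trans hsum).symm, hcross _ _ (ht' j) (ht k) hj⟩
    · push_neg at hej
      have : (∑ j', if u' j' = u k then a' j' else 0) = 0 :=
        Finset.sum_eq_zero (by intro j _; simp [hej j])
      rw [this] at h
      exact absurd h (ha k)
  choose σ hσ1 hσ2 hσ3 using hex
  have hσinj : Function.Injective σ := by
    intro k1 k2 h
    apply htd
    rw [← hσ3 k1, ← hσ3 k2, h]
  have hbij : Function.Bijective σ := Finite.injective_iff_bijective.mp hσinj
  let e : Fin K ≃ Fin K := Equiv.ofBijective σ hbij
  have hperm : Multiset.map σ Finset.univ.val = Finset.univ.val := by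
    have h2 : (Finset.univ.map e.toEmbedding).val = Multiset.map σ Finset.univ.val := by
      rw [Finset.map_val]
      rfl
    rw [Finset.map_univ_equiv] at h2
    exact h2.symm
  calc Multiset.map (fun k => (a k, t k)) Finset.univ.val
      = Multiset.map ((fun k => (a' k, t' k)) ∘ σ) Finset.univ.val := by
        apply Multiset.map_congr rfl
        intro k _
        simp only [Function.comp_apply, Prod.mk.injEq]
        exact ⟨(hσ2 k).symm, (hσ3 k).symm⟩
    _ = Multiset.map (fun k => (a' k, t' k)) (Multiset.map σ Finset.univ.val) :=
        (Multiset.map_map _ _ _).symm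
    _ = Multiset.map (fun k => (a' k, t' k)) Finset.univ.val := by rw [hperm]
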